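/- Let G be a matching covered bipartite graph with bipartition (A, B), and let X ⊆ V(G) be a set such that every neighbor of a vertex in X ∩ A lies in X ∩ B. Then |X ∩ A| ≤ |X ∩ B|, with equality if and only if X = ∅ or X = V(G). -/
import Mathlib


open SimpleGraph

universe u

/-- A graph has a perfect matching. -/
def HasPM {V : Type u} (G : SimpleGraph V) : Prop :=
  ∃ M : G.Subgraph, M.IsPerfectMatching

/-- A connected graph with at least two vertices in which every edge
lies in a perfect matching. -/
def MatchingCovered {V : Type u} (G : SimpleGraph V) : Prop :=
  G.Connected ∧ 2 ≤ Nat.card V ∧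
    ∀ e ∈ G.edgeSet, ∃ M : G.Subgraph, M.IsPerfectMatching ∧ e ∈ M.edgeSet

/-- Number of odd connected components. -/
noncomputable def oddComps {V : Type u} (G : SimpleGraph V) : ℕ :=
  Nat.card {c : G.ConnectedComponent // Odd (Nat.card c.supp)}

/-- An edge is removable if its deletion leaves a matching covered graph. -/
def Removable {V : Type u} (G : SimpleGraph V) (e : Sym2 V) : Prop :=
  e ∈ G.edgeSet ∧ MatchingCovered (G.deleteEdges {e})

/-- Removable, with absent edges counted as removable. -/
def RemovableExt {V : Type u} (G : SimpleGraph V) (e : Sym2 V) : Prop :=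
  e ∉ G.edgeSet ∨ Removable G e

/-- Degree of a vertex. -/
noncomputable def degN {V : Type u} (G : SimpleGraph V) (v : V) : ℕ :=
  Nat.card (G.neighborSet v)

/-- A graph on at least four vertices is bicritical if deleting any two
distinct vertices leaves a graph with a perfect matching. -/
def Bicritical {V : Type u} (G : SimpleGraph V) : Prop :=
  4 ≤ Nat.card V ∧ ∀ u v : V, u ≠ v → HasPM (G.induce ({u, v}ᶜ : Set V))

/-- A barrier: nonempty set `B` with `o(G - B) = |B|`. -/
def IsBarrier {V : Type u} (G : SimpleGraph V) (B : Set V) : Prop :=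
  B.Nonempty ∧ oddComps (G.induce (Bᶜ : Set V)) = B.ncard

/-- 2-connectedness. -/
def TwoConnected {V : Type u} (G : SimpleGraph V) : Prop :=
  3 ≤ Nat.card V ∧ ∀ s : Set V, s.ncard ≤ 1 → (G.induce (sᶜ : Set V)).Connected

/-- 3-connectedness. -/
def ThreeConnected {V : Type u} (G : SimpleGraph V) : Prop :=
  4 ≤ Nat.card V ∧ ∀ s : Set V, s.ncard ≤ 2 → (G.induce (sᶜ : Set V)).Connected

/-- A brick is a 3-connected bicritical graph. -/
def IsBrick {V : Type u} (G : SimpleGraph V) : Prop :=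
  ThreeConnected G ∧ Bicritical G

/-- Map a vertex to the vertex set of the contraction `G/X`. -/
noncomputable def toContract {V : Type u} (X : Set V) (v : V) : ↥(Xᶜ) ⊕ Unit := by
  classical exact if h : v ∈ X then Sum.inr () else Sum.inl ⟨v, h⟩

/-- Contraction `G/X` of the set `X` to a single vertex. -/
noncomputable def contract {V : Type u} (G : SimpleGraph V) (X : Set V) :
    SimpleGraph (↥(Xᶜ) ⊕ Unit) :=
  SimpleGraph.fromRel (fun a b =>
    ∃ x y, G.Adj x y ∧ a = toContract X x ∧ b = toContract X y)

/-- The edge cut `∂(X)`. -/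
def cutEdges {V : Type u} (G : SimpleGraph V) (X : Set V) : Set (Sym2 V) :=
  {e | e ∈ G.edgeSet ∧ ∃ x y, e = s(x, y) ∧ x ∈ X ∧ y ∉ X}

/-- A tight cut: every perfect matching meets it in exactly one edge. -/
def IsTightCut {V : Type u} (G : SimpleGraph V) (X : Set V) : Prop :=
  ∀ M : G.Subgraph, M.IsPerfectMatching → (cutEdges G X ∩ M.edgeSet).ncard = 1

/-- A separating cut: both contractions are matching covered. -/
def IsSeparatingCut {V : Type u} (G : SimpleGraph V) (X : Set V) : Prop :=
  MatchingCovered (contract G X) ∧ MatchingCovered (contract G Xᶜ)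

/-- `(A, B)` is a bipartition of `G`. -/
def IsBipartition {V : Type u} (G : SimpleGraph V) (A B : Set V) : Prop :=
  A ∪ B = Set.univ ∧ A ∩ B = ∅ ∧
    ∀ u v : V, G.Adj u v → (u ∈ A ∧ v ∈ B) ∨ (u ∈ B ∧ v ∈ A)

/-- A P-set of a bipartite matching covered graph with bipartition `(A, B)`. -/
def IsPSet {V : Type u} (G : SimpleGraph V) (A B X : Set V) : Prop :=
  (X ∩ A).ncard = (X ∩ B).ncard ∧
    ((∃! p : V × V, p.1 ∈ X ∩ A ∧ p.2 ∈ B \ X ∧ G.Adj p.1 p.2) ∨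
     (∃! p : V × V, p.1 ∈ A \ X ∧ p.2 ∈ X ∩ B ∧ G.Adj p.1 p.2))

section Helpers

variable {V : Type u} {G : SimpleGraph V} {M : G.Subgraph}

/-- The partner of a vertex under a perfect matching. -/
noncomputable def pmPartner (hM : M.IsPerfectMatching) (v : V) : V :=
  (hM.1 (hM.2 v)).choose

lemma pmPartner_adj (hM : M.IsPerfectMatching) (v : V) : M.Adj v (pmPartner hM v) :=
  (hM.1 (hM.2 v)).choose_spec.1

lemma pmPartner_inj (hM : M.IsPerfectMatching) : Function.Injective (pmPartner hM) := by
  intro a b hab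
  have h1 : M.Adj (pmPartner hM a) a := (pmPartner_adj hM a).symm
  have h2 : M.Adj (pmPartner hM a) b := by rw [hab]; exact (pmPartner_adj hM b).symm
  exact (hM.1 (hM.2 (pmPartner hM a))).unique h1 h2

end Helpers

theorem stmt8 {V : Type u} [Finite V] (G : SimpleGraph V) (A B : Set V)
    (hG : MatchingCovered G) (hbip : IsBipartition G A B)
    (X : Set V) (hN : ∀ a ∈ X ∩ A, ∀ b : V, G.Adj a b → b ∈ X ∩ B) :
    (X ∩ A).ncard ≤ (X ∩ B).ncard ∧
      ((X ∩ A).ncard = (X ∩ B).ncard ↔ X = ∅ ∨ X = Set.univ) := by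
  classical
  have hdisj : ∀ a : V, a ∈ A → a ∈ B → False := by
    intro a h1 h2
    have : a ∈ A ∩ B := ⟨h1, h2⟩
    rw [hbip.2.1] at this
    exact this
  -- obtain an edge of G
  obtain ⟨u0, v0, hadj0⟩ : ∃ u v : V, G.Adj u v := by
    have : Nontrivial V := Finite.one_lt_card_iff_nontrivial.mp hG.2.1
    obtain ⟨u, v, hne⟩ := exists_pair_ne V
    obtain ⟨w⟩ := hG.1.preconnected u v
    cases w with
    | nil => exact absurd rfl hne
    | cons h _ => exact ⟨_, _, h⟩
  obtain ⟨M, hM, -⟩ := hG.2.2 s(u0, v0) hadj0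
  have hmaps : ∀ a ∈ X ∩ A, pmPartner hM a ∈ X ∩ B := fun a ha =>
    hN a ha _ (M.adj_sub (pmPartner_adj hM a))
  have hle : (X ∩ A).ncard ≤ (X ∩ B).ncard :=
    Set.ncard_le_ncard_of_injOn _ hmaps ((pmPartner_inj hM).injOn)
  refine ⟨hle, ?_, ?_⟩
  · intro heq
    by_contra hcon
    push_neg at hcon
    obtain ⟨hne, hnu⟩ := hcon
    obtain ⟨u, hu⟩ := hne
    obtain ⟨v, hv⟩ : ∃ v, v ∉ X := by
      by_contra h; push_neg at h; exact hnu (Set.eq_univ_of_forall h)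
    obtain ⟨w⟩ := hG.1.preconnected u v
    obtain ⟨d, -, hd1, hd2⟩ := w.exists_boundary_dart X hu hv
    have hadj : G.Adj d.toProd.1 d.toProd.2 := d.adj
    rcases hbip.2.2 _ _ hadj with ⟨hA, hB⟩ | ⟨hB, hA'⟩
    · exact hd2 (hN _ ⟨hd1, hA⟩ _ hadj).1
    · obtain ⟨M', hM', he'⟩ := hG.2.2 s(d.toProd.1, d.toProd.2) hadj
      have hadjM' : M'.Adj d.toProd.1 d.toProd.2 :=
        SimpleGraph.Subgraph.mem_edgeSet.mp he'
      have hmaps' : ∀ a ∈ X ∩ A, pmPartner hM' a ∈ X ∩ B := fun a ha =>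
        hN a ha _ (M'.adj_sub (pmPartner_adj hM' a))
      have himg : pmPartner hM' '' (X ∩ A) = X ∩ B := by
        apply Set.eq_of_subset_of_ncard_le (ht := Set.toFinite _)
        · rintro _ ⟨a, ha, rfl⟩; exact hmaps' a ha
        · rw [Set.ncard_image_of_injOn ((pmPartner_inj hM').injOn)]
          exact heq.ge
      have hmem : d.toProd.1 ∈ pmPartner hM' '' (X ∩ A) := by
        rw [himg]; exact ⟨hd1, hB⟩
      obtain ⟨a, haX, hfa⟩ := hmem
      have h1 : M'.Adj d.toProd.1 a := by
        rw [← hfa]; exact (pmPartner_adj hM' a).symm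
      have : a = d.toProd.2 := (hM'.1 (hM'.2 d.toProd.1)).unique h1 hadjM'
      exact hd2 (this ▸ haX.1)
  · rintro (rfl | rfl)
    · simp
    · simp only [Set.univ_inter]
      have hAB : ∀ a ∈ A, pmPartner hM a ∈ B := by
        intro a ha
        rcases hbip.2.2 _ _ (M.adj_sub (pmPartner_adj hM a)) with ⟨_, h⟩ | ⟨h, _⟩
        · exact h
        · exact absurd h (fun h => hdisj a ha h)
      have hBA : ∀ b ∈ B, pmPartner hM b ∈ A := by
        intro b hb
        rcases hbip.2.2 _ _ (M.adj_sub (pmPartner_adj hM b)) with ⟨h, _⟩ | ⟨_, h⟩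
        · exact absurd h (fun h => hdisj b h hb)
        · exact h
      exact le_antisymm
        (Set.ncard_le_ncard_of_injOn _ hAB ((pmPartner_inj hM).injOn))
        (Set.ncard_le_ncard_of_injOn _ hBA ((pmPartner_inj hM).injOn))
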